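/- Let p be prime and G a subgroup of the multiplicative group (ℤ/pℤ)*. Define S(t,G) = Σ_{g∈G} e_p(tg) and S(G) = max_{t ≢ 0 (mod p)} |S(t,G)|. Then for the number A(P_1,...,P_s) of solutions of a_1 m_1 + ... + a_s m_s ≡ 0 (mod p) with a_i ∈ G and 1 ≤ m_i ≤ P_i, summed over all choices of (a_1,...,a_s) ∈ G^s, one has A(P_1,...,P_s) ≤ (#G^s / p) · P_1···P_s + S(G)^{s-2} · #G · P_1···P_s. -/

import Mathlib

set_option maxHeartbeats 1000000

open Complex Finset
open scoped Classical

section Aux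

variable (p : ℕ) [Fact p.Prime]

lemma korobov_orth (t : ZMod p) :
    ∑ n : ZMod p, ZMod.stdAddChar (t * n) = if t = 0 then (p : ℂ) else 0 := by
  have := AddChar.sum_mulShift (R := ZMod p) (R' := ℂ) t (ZMod.isPrimitive_stdAddChar p)
  simp only [mul_comm] at this ⊢
  rw [this, ZMod.card]
  split_ifs <;> simp

lemma korobov_psi_abs (x : ZMod p) : ‖ZMod.stdAddChar x‖ = 1 := by
  rw [ZMod.stdAddChar_apply]; exact Circle.norm_coe _

lemma korobov_psi_conj (x : ZMod p) :
    (starRingEnd ℂ) (ZMod.stdAddChar x) = ZMod.stdAddChar (-x) := by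
  have h2 : ZMod.stdAddChar x * ZMod.stdAddChar (-x) = 1 := by
    rw [← AddChar.map_add_eq_mul, add_neg_cancel, AddChar.map_zero_eq_one]
  rw [← Complex.inv_eq_conj (korobov_psi_abs p x)]
  exact (eq_inv_of_mul_eq_one_left (by linear_combination h2)).symm

lemma korobov_psi_sum {ι : Type*} (s : Finset ι) (f : ι → ZMod p) :
    ZMod.stdAddChar (∑ i ∈ s, f i) = ∏ i ∈ s, ZMod.stdAddChar (f i) := by
  classical
  induction s using Finset.cons_induction with
  | empty => simp
  | cons a s ha ih => rw [Finset.sum_cons, Finset.prod_cons, AddChar.map_add_eq_mul, ih]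

lemma korobov_sum_Icc (f : ZMod p → ℂ) :
    ∑ m ∈ Finset.Icc (1 : ℤ) (p : ℤ), f ((m : ZMod p)) = ∑ t : ZMod p, f t := by
  have hp2 : 2 ≤ p := (Fact.out : p.Prime).two_le
  refine Finset.sum_nbij' (i := fun m => ((m : ZMod p)))
    (j := fun t => if t = 0 then (p : ℤ) else (t.val : ℤ)) ?_ ?_ ?_ ?_ ?_
  · intro a _; exact Finset.mem_univ _
  · intro t _
    simp only [Finset.mem_Icc]
    split_ifs with h
    · omega
    · have hv1 : t.val ≠ 0 := fun h0 => h ((ZMod.val_eq_zero t).mp h0)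
      have hv2 : t.val < p := ZMod.val_lt t
      omega
  · intro m hm
    simp only [Finset.mem_Icc] at hm
    by_cases h0 : ((m : ZMod p)) = 0
    · rw [if_pos h0]
      rw [ZMod.intCast_zmod_eq_zero_iff_dvd] at h0
      have := Int.le_of_dvd (by omega) h0
      omega
    · rw [if_neg h0]
      have hmp : m ≠ (p : ℤ) := by
        intro hmp; apply h0; rw [hmp]; push_cast; simp
      have h4 := ZMod.val_intCast (n := p) m
      have h3 : m % (p : ℤ) = m := Int.emod_eq_of_lt (by omega) (by omega)
      omega
  · intro t _
    split_ifs with h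
    · rw [h]; push_cast; simp
    · push_cast [ZMod.natCast_val, ZMod.cast_id]
      rfl
  · intro m _; rfl

lemma korobov_nat_arith (p : ℕ) (h : 2 ≤ p) : p * (p - 1) + (p - 1) ≤ p * p := by
  obtain ⟨q, rfl⟩ := Nat.exists_eq_add_of_le h
  have h1 : 2 + q - 1 = 1 + q := by omega
  rw [h1]
  nlinarith [Nat.zero_le q]

lemma korobov_intCast_ne_zero (m : ℤ) (h1 : 1 ≤ m) (h2 : m < p) : ((m : ZMod p)) ≠ 0 := by
  intro h0
  rw [ZMod.intCast_zmod_eq_zero_iff_dvd] at h0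
  have := Int.le_of_dvd (by omega) h0
  omega

end Aux

/-- Cauchy–Schwarz bound for the number of solutions of
`a₁m₁ + ⋯ + aₛmₛ ≡ 0 (mod p)` with `aᵢ ∈ G`, `1 ≤ mᵢ ≤ Pᵢ`:
`A ≤ (#G^s/p)·P₁⋯Pₛ + S(G)^{s-2}·#G·P₁⋯Pₛ`. -/
theorem korobov_count_CS_bound
    (p : ℕ) (hp : p.Prime) [Fact p.Prime]
    (G : Subgroup (ZMod p)ˣ) (s : ℕ) (hs : 2 ≤ s)
    (P : Fin s → ℕ) (hP : ∀ i, 1 ≤ P i ∧ P i ≤ p)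
    (S : ZMod p → ℂ)
    (hS : ∀ t : ZMod p, S t = ∑ g ∈ Finset.univ.filter (fun g : (ZMod p)ˣ => g ∈ G),
        Complex.exp (2 * Real.pi * Complex.I * ((t * (g : (ZMod p)ˣ) : ZMod p).val : ℂ) / p))
    (SG : ℝ)
    (hSG : IsGreatest {x : ℝ | ∃ t : ZMod p, t ≠ 0 ∧ x = ‖S t‖} SG)
    (A : ℕ)
    (hA : A = Nat.card {am : (Fin s → (ZMod p)ˣ) × (Fin s → ℤ) //
        (∀ i, am.1 i ∈ G) ∧ (∀ i, 1 ≤ am.2 i ∧ am.2 i ≤ (P i : ℤ)) ∧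
        (∑ i, (am.1 i : ZMod p) * (am.2 i : ZMod p)) = 0}) :
    (A : ℝ) ≤ ((Nat.card G : ℝ) ^ s / p) * ∏ i, (P i : ℝ) +
      SG ^ (s - 2) * (Nat.card G : ℝ) * ∏ i, (P i : ℝ) := by
  classical
  set ψ : AddChar (ZMod p) ℂ := ZMod.stdAddChar with hψ
  set Gf : Finset (ZMod p)ˣ := Finset.univ.filter (fun g : (ZMod p)ˣ => g ∈ G) with hGf
  set M : Fin s → Finset ℤ := fun i => Finset.Icc 1 (P i) with hM
  set D : Finset (Fin s → (ZMod p)ˣ × ℤ) := Fintype.piFinset (fun i => Gf ×ˢ M i) with hD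
  set T : Fin s → ZMod p → ℂ :=
    fun i n => ∑ y ∈ Gf ×ˢ M i, ψ (n * (y.1 : ZMod p) * (y.2 : ZMod p)) with hT
  have hp2 : 2 ≤ p := hp.two_le
  have hGcard : (Nat.card G : ℕ) = Gf.card := by
    rw [Nat.card_eq_fintype_card, hGf, ← Fintype.card_subtype]
  have hMcard : ∀ i, (M i).card = P i := by
    intro i; rw [hM]; simp [Int.card_Icc]
  -- Step A : A as a finset card
  have hAcard : A = (D.filter (fun x => (∑ i, ((x i).1 : ZMod p) * ((x i).2 : ZMod p)) = 0)).card := by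
    rw [hA, ← Nat.card_eq_finsetCard]
    apply Nat.card_congr
    refine Equiv.subtypeEquiv (Equiv.arrowProdEquivProdArrow _ _ _).symm ?_
    intro am
    simp only [Equiv.arrowProdEquivProdArrow, Equiv.coe_fn_symm_mk, hD, Fintype.mem_piFinset,
      Finset.mem_product, hGf, hM, Finset.mem_filter, Finset.mem_univ, true_and,
      Finset.mem_Icc, forall_and, and_assoc]
  set C : (Fin s → (ZMod p)ˣ × ℤ) → Prop :=
    fun x => (∑ i, ((x i).1 : ZMod p) * ((x i).2 : ZMod p)) = 0 with hC
  -- Step B : character sum identity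
  have key : (p : ℂ) * ((D.filter C).card : ℂ) = ∑ n : ZMod p, ∏ i, T i n := by
    calc (p : ℂ) * ((D.filter C).card : ℂ)
        = ∑ _x ∈ D.filter C, (p : ℂ) := by rw [Finset.sum_const, nsmul_eq_mul, mul_comm]
      _ = ∑ x ∈ D, if C x then (p : ℂ) else 0 := Finset.sum_filter _ _
      _ = ∑ x ∈ D, ∑ n : ZMod p,
            ψ ((∑ i, ((x i).1 : ZMod p) * ((x i).2 : ZMod p)) * n) := by
          refine Finset.sum_congr rfl fun x _ => ?_
          rw [hψ, korobov_orth]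
      _ = ∑ n : ZMod p, ∑ x ∈ D,
            ∏ i, ψ (n * ((x i).1 : ZMod p) * ((x i).2 : ZMod p)) := by
          rw [Finset.sum_comm]
          refine Finset.sum_congr rfl fun n _ => Finset.sum_congr rfl fun x _ => ?_
          rw [Finset.sum_mul, hψ, korobov_psi_sum]
          exact Finset.prod_congr rfl fun i _ => congrArg _ (by ring)
      _ = ∑ n : ZMod p, ∏ i, T i n := by
          refine Finset.sum_congr rfl fun n _ => ?_
          rw [hT]
          exact (Finset.prod_univ_sum (fun i => Gf ×ˢ M i)
            (fun i y => ψ (n * ((y.1 : (ZMod p)ˣ) : ZMod p) * ((y.2 : ℤ) : ZMod p)))).symm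
  -- T at frequency 0
  have hT0 : ∀ i, T i 0 = ((Gf.card : ℂ)) * (P i : ℂ) := by
    intro i
    rw [hT]
    simp only [zero_mul, AddChar.map_zero_eq_one]
    rw [Finset.sum_const, Finset.card_product, hMcard, nsmul_eq_mul, mul_one]
    push_cast; ring
  -- S in terms of the additive character
  have hSpsi : ∀ t : ZMod p, S t = ∑ g ∈ Gf, ψ (t * ((g : (ZMod p)ˣ) : ZMod p)) := by
    intro t
    rw [hS]
    refine Finset.sum_congr rfl fun g _ => ?_
    rw [hψ, ZMod.stdAddChar_apply, ZMod.toCircle_apply]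
  -- rewrite T via S
  have hTS : ∀ i, ∀ n : ZMod p, T i n = ∑ m ∈ M i, S (n * (m : ZMod p)) := by
    intro i n
    rw [hT]
    simp only
    rw [Finset.sum_product, Finset.sum_comm]
    refine Finset.sum_congr rfl fun m _ => ?_
    rw [hSpsi]
    refine Finset.sum_congr rfl fun g _ => ?_
    exact congrArg _ (by ring)
  -- SG facts
  obtain ⟨t₀, ht₀, hSG0⟩ := hSG.1
  have hSGnn : 0 ≤ SG := hSG0 ▸ norm_nonneg _
  have hSle : ∀ t : ZMod p, t ≠ 0 → ‖S t‖ ≤ SG := fun t ht => hSG.2 ⟨t, ht, rfl⟩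
  -- Step D : bound on |T i n| for n ≠ 0
  have hTbound : ∀ i, ∀ n : ZMod p, n ≠ 0 → ‖T i n‖ ≤ SG * P i := by
    intro i n hn
    rcases eq_or_lt_of_le (hP i).2 with hPi | hPi
    · -- P i = p, the sum vanishes
      have hz : T i n = 0 := by
        rw [hTS, hM]
        simp only
        rw [hPi]
        have hbij : (∑ m ∈ Finset.Icc (1:ℤ) (p:ℤ), S (n * (m : ZMod p)))
            = ∑ t : ZMod p, S (n * t) := korobov_sum_Icc p (fun t => S (n * t))
        rw [hbij, show (∑ t : ZMod p, S (n * t)) = ∑ t : ZMod p, S t from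
          Equiv.sum_comp (Equiv.mulLeft₀ n hn) S]
        calc (∑ t : ZMod p, S t)
            = ∑ t : ZMod p, ∑ g ∈ Gf, ψ (t * ((g : (ZMod p)ˣ) : ZMod p)) := by
              exact Finset.sum_congr rfl fun t _ => hSpsi t
          _ = ∑ g ∈ Gf, ∑ t : ZMod p, ψ (((g : (ZMod p)ˣ) : ZMod p) * t) := by
              rw [Finset.sum_comm]
              exact Finset.sum_congr rfl fun g _ => Finset.sum_congr rfl fun t _ =>
                congrArg _ (mul_comm _ _)
          _ = 0 := by
              rw [hψ]
              refine Finset.sum_eq_zero fun g _ => ?_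
              rw [korobov_orth, if_neg (Units.ne_zero g)]
      rw [hz]
      simpa using mul_nonneg hSGnn (Nat.cast_nonneg _)
    · -- P i < p
      rw [hTS]
      refine (norm_sum_le _ _).trans ?_
      have hterm : ∀ m ∈ M i, ‖S (n * (m : ZMod p))‖ ≤ SG := by
        intro m hm
        rw [hM] at hm
        simp only [Finset.mem_Icc] at hm
        have hm0 : ((m : ZMod p)) ≠ 0 :=
          korobov_intCast_ne_zero p m hm.1 (by exact_mod_cast hm.2.trans_lt (by exact_mod_cast hPi))
        exact hSle _ (mul_ne_zero hn hm0)
      refine (Finset.sum_le_sum hterm).trans ?_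
      rw [Finset.sum_const, hMcard, nsmul_eq_mul, mul_comm]
  -- Step E : Parseval bound
  have hGle : Gf.card ≤ p - 1 := by
    calc Gf.card ≤ Fintype.card (ZMod p)ˣ := Finset.card_le_univ _
      _ = p - 1 := ZMod.card_units_eq_totient p ▸ Nat.totient_prime hp
  have hpars : ∀ i, ∑ n : ZMod p, ‖T i n‖ ^ 2
      ≤ (p : ℝ) * Gf.card * ((P i : ℝ) * (P i : ℝ)) := by
    intro i
    set Q := Finset.filter (fun q : ((ZMod p)ˣ × ℤ) × ((ZMod p)ˣ × ℤ) =>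
        ((q.1.1 : (ZMod p)ˣ) : ZMod p) * ((q.1.2 : ℤ) : ZMod p)
          = ((q.2.1 : (ZMod p)ˣ) : ZMod p) * ((q.2.2 : ℤ) : ZMod p))
        ((Gf ×ˢ M i) ×ˢ (Gf ×ˢ M i)) with hQ
    have hcount : ((∑ n : ZMod p, ‖T i n‖ ^ 2 : ℝ) : ℂ)
        = (p : ℂ) * (Q.card : ℂ) := by
      push_cast
      calc ∑ n : ZMod p, (‖T i n‖ : ℂ) ^ 2
          = ∑ n : ZMod p, T i n * (starRingEnd ℂ) (T i n) := by
            refine Finset.sum_congr rfl fun n _ => ?_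
            rw [← Complex.ofReal_pow, Complex.sq_norm, Complex.mul_conj]
        _ = ∑ n : ZMod p, ∑ y ∈ Gf ×ˢ M i, ∑ z ∈ Gf ×ˢ M i,
              ψ ((((y.1 : (ZMod p)ˣ) : ZMod p) * ((y.2 : ℤ) : ZMod p)
                - ((z.1 : (ZMod p)ˣ) : ZMod p) * ((z.2 : ℤ) : ZMod p)) * n) := by
            refine Finset.sum_congr rfl fun n _ => ?_
            rw [hT]
            simp only
            rw [map_sum, Finset.sum_mul_sum]
            refine Finset.sum_congr rfl fun y _ => Finset.sum_congr rfl fun z _ => ?_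
            rw [hψ, korobov_psi_conj, ← AddChar.map_add_eq_mul]
            exact congrArg _ (by ring)
        _ = ∑ y ∈ Gf ×ˢ M i, ∑ z ∈ Gf ×ˢ M i, ∑ n : ZMod p,
              ψ ((((y.1 : (ZMod p)ˣ) : ZMod p) * ((y.2 : ℤ) : ZMod p)
                - ((z.1 : (ZMod p)ˣ) : ZMod p) * ((z.2 : ℤ) : ZMod p)) * n) := by
            rw [Finset.sum_comm]
            exact Finset.sum_congr rfl fun y _ => Finset.sum_comm
        _ = ∑ y ∈ Gf ×ˢ M i, ∑ z ∈ Gf ×ˢ M i,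
              (if ((y.1 : (ZMod p)ˣ) : ZMod p) * ((y.2 : ℤ) : ZMod p)
                = ((z.1 : (ZMod p)ˣ) : ZMod p) * ((z.2 : ℤ) : ZMod p) then (p : ℂ) else 0) := by
            refine Finset.sum_congr rfl fun y _ => Finset.sum_congr rfl fun z _ => ?_
            rw [hψ, korobov_orth]
            simp [sub_eq_zero]
        _ = (p : ℂ) * (Q.card : ℂ) := by
            rw [← Finset.sum_product', hQ, ← Finset.sum_filter, Finset.sum_const,
              nsmul_eq_mul, mul_comm]
    have hreal : (∑ n : ZMod p, ‖T i n‖ ^ 2) = (p : ℝ) * Q.card := by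
      exact_mod_cast hcount
    rw [hreal]
    -- now bound Q.card
    have hQb : Q.card ≤ Gf.card * (P i * P i) := by
      set Q1 := Q.filter (fun q : ((ZMod p)ˣ × ℤ) × ((ZMod p)ˣ × ℤ) =>
        ((q.2.2 : ℤ) : ZMod p) ≠ 0) with hQ1
      set Q2 := Q.filter (fun q : ((ZMod p)ˣ × ℤ) × ((ZMod p)ˣ × ℤ) =>
        ¬ ((q.2.2 : ℤ) : ZMod p) ≠ 0) with hQ2
      have hsplitQ : Q1.card + Q2.card = Q.card :=
        Finset.card_filter_add_card_filter_not _
      -- facts about membership in Q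
      have hmemQ : ∀ q ∈ Q, (q.1.1 ∈ Gf ∧ q.1.2 ∈ M i) ∧ (q.2.1 ∈ Gf ∧ q.2.2 ∈ M i) ∧
          ((q.1.1 : (ZMod p)ˣ) : ZMod p) * ((q.1.2 : ℤ) : ZMod p)
            = ((q.2.1 : (ZMod p)ˣ) : ZMod p) * ((q.2.2 : ℤ) : ZMod p) := by
        intro q hq
        rw [hQ, Finset.mem_filter, Finset.mem_product, Finset.mem_product,
          Finset.mem_product] at hq
        tauto
      -- bound on Q1
      have hQ1b : Q1.card ≤ (Gf ×ˢ (M i ×ˢ (M i).erase (p : ℤ))).card := by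
        apply Finset.card_le_card_of_injOn (fun q => (q.1.1, (q.1.2, q.2.2)))
        · intro q hq
          rw [hQ1, Finset.mem_coe, Finset.mem_filter] at hq
          obtain ⟨hqQ, hne⟩ := hq
          obtain ⟨⟨h1, h2⟩, ⟨h3, h4⟩, h5⟩ := hmemQ q hqQ
          have hq22 : q.2.2 ≠ (p : ℤ) := by
            intro hc; apply hne; rw [hc]; push_cast; simp
          simp only [Finset.mem_coe, Finset.mem_product, Finset.mem_erase]
          exact ⟨h1, h2, hq22, h4⟩
        · intro q1 hq1 q2 hq2 heq
          simp only [Finset.mem_coe] at hq1 hq2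
          rw [hQ1, Finset.mem_filter] at hq1 hq2
          obtain ⟨hqQ1, hne1⟩ := hq1
          obtain ⟨hqQ2, hne2⟩ := hq2
          obtain ⟨_, _, h5⟩ := hmemQ q1 hqQ1
          obtain ⟨_, _, h5'⟩ := hmemQ q2 hqQ2
          simp only [Prod.mk.injEq] at heq
          obtain ⟨e1, e2, e3⟩ := heq
          have ha' : q1.2.1 = q2.2.1 := by
            have : ((q1.2.1 : (ZMod p)ˣ) : ZMod p) = ((q2.2.1 : (ZMod p)ˣ) : ZMod p) := by
              apply mul_right_cancel₀ hne1
              rw [h5.symm, e1, e2, e3, h5']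
            exact Units.ext this
          have hp1 : q1.1 = q2.1 := Prod.ext e1 e2
          have hp2 : q1.2 = q2.2 := Prod.ext ha' e3
          exact Prod.ext hp1 hp2
      -- bound on Q2
      have hQ2b : Q2.card ≤ (Gf ×ˢ Gf).card := by
        apply Finset.card_le_card_of_injOn (fun q => (q.1.1, q.2.1))
        · intro q hq
          rw [hQ2, Finset.mem_coe, Finset.mem_filter] at hq
          obtain ⟨hqQ, _⟩ := hq
          obtain ⟨⟨h1, _⟩, ⟨h3, _⟩, _⟩ := hmemQ q hqQ
          simp only [Finset.mem_coe, Finset.mem_product]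
          exact ⟨h1, h3⟩
        · intro q1 hq1 q2 hq2 heq
          simp only [Finset.mem_coe] at hq1 hq2
          rw [hQ2, Finset.mem_filter, not_not] at hq1 hq2
          obtain ⟨hqQ1, hz1⟩ := hq1
          obtain ⟨hqQ2, hz2⟩ := hq2
          obtain ⟨⟨_, hm1⟩, ⟨_, hm1'⟩, h5⟩ := hmemQ q1 hqQ1
          obtain ⟨⟨_, hm2⟩, ⟨_, hm2'⟩, h5'⟩ := hmemQ q2 hqQ2
          simp only [Prod.mk.injEq] at heq
          obtain ⟨e1, e3⟩ := heq
          -- in Q2, both m-coordinates are forced to equal p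
          have hforce : ∀ (m : ℤ), m ∈ M i → ((m : ℤ) : ZMod p) = 0 → m = (p : ℤ) := by
            intro m hm hmz
            rw [hM] at hm
            simp only [Finset.mem_Icc] at hm
            rw [ZMod.intCast_zmod_eq_zero_iff_dvd] at hmz
            have h6 := Int.le_of_dvd (by linarith [hm.1]) hmz
            have h7 : (P i : ℤ) ≤ (p : ℤ) := by exact_mod_cast (hP i).2
            linarith [hm.2]
          have hz1' : ((q1.1.2 : ℤ) : ZMod p) = 0 := by
            by_contra hc
            have := h5.trans (by rw [hz1, mul_zero])
            exact hc (by
              have hu : ((q1.1.1 : (ZMod p)ˣ) : ZMod p) ≠ 0 := Units.ne_zero _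
              exact (mul_eq_zero.mp this).resolve_left hu)
          have hz2' : ((q2.1.2 : ℤ) : ZMod p) = 0 := by
            by_contra hc
            have := h5'.trans (by rw [hz2, mul_zero])
            exact hc (by
              have hu : ((q2.1.1 : (ZMod p)ˣ) : ZMod p) ≠ 0 := Units.ne_zero _
              exact (mul_eq_zero.mp this).resolve_left hu)
          have hm11 : q1.1.2 = (p : ℤ) := hforce _ hm1 hz1'
          have hm12 : q1.2.2 = (p : ℤ) := hforce _ hm1' hz1
          have hm21 : q2.1.2 = (p : ℤ) := hforce _ hm2 hz2'
          have hm22 : q2.2.2 = (p : ℤ) := hforce _ hm2' hz2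
          have hp1 : q1.1 = q2.1 := Prod.ext e1 (by rw [hm11, hm21])
          have hp2 : q1.2 = q2.2 := Prod.ext e3 (by rw [hm12, hm22])
          exact Prod.ext hp1 hp2
      -- combine the two bounds, by cases on whether p ∈ M i
      by_cases hpM : (p : ℤ) ∈ M i
      · -- P i = p
        have hPieq : P i = p := by
          rw [hM] at hpM
          simp only [Finset.mem_Icc] at hpM
          have : (p : ℤ) ≤ (P i : ℤ) := hpM.2
          have h7 : P i ≤ p := (hP i).2
          exact le_antisymm h7 (by exact_mod_cast this)
        have hc1 : ((M i).erase (p : ℤ)).card = P i - 1 := by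
          rw [Finset.card_erase_of_mem hpM, hMcard]
        have hc2 : Q1.card ≤ Gf.card * (P i * (P i - 1)) := by
          refine hQ1b.trans ?_
          rw [Finset.card_product, Finset.card_product, hMcard, hc1]
        have hc3 : Q2.card ≤ Gf.card * (p - 1) := by
          refine hQ2b.trans ?_
          rw [Finset.card_product]
          exact Nat.mul_le_mul_left _ hGle
        have h1le : 1 ≤ P i := (hP i).1
        calc Q.card = Q1.card + Q2.card := hsplitQ.symm
          _ ≤ Gf.card * (P i * (P i - 1)) + Gf.card * (p - 1) := Nat.add_le_add hc2 hc3
          _ ≤ Gf.card * (P i * P i) := by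
            rw [← Nat.mul_add]
            apply Nat.mul_le_mul_left
            rw [hPieq]
            exact korobov_nat_arith p hp2
      · -- p ∉ M i : Q2 is empty
        have hQ2e : Q2.card = 0 := by
          rw [Finset.card_eq_zero]
          rw [Finset.eq_empty_iff_forall_notMem]
          intro q hq
          rw [hQ2, Finset.mem_filter, not_not] at hq
          obtain ⟨hqQ, hz⟩ := hq
          obtain ⟨_, ⟨_, hm'⟩, _⟩ := hmemQ q hqQ
          apply hpM
          have hforce : q.2.2 = (p : ℤ) := by
            rw [hM] at hm'
            simp only [Finset.mem_Icc] at hm'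
            rw [ZMod.intCast_zmod_eq_zero_iff_dvd] at hz
            have h6 := Int.le_of_dvd (by linarith [hm'.1]) hz
            have h7 : (P i : ℤ) ≤ (p : ℤ) := by exact_mod_cast (hP i).2
            linarith [hm'.2]
          rw [← hforce]; exact hm'
        have hc2 : Q1.card ≤ Gf.card * (P i * P i) := by
          refine hQ1b.trans ?_
          rw [Finset.card_product, Finset.card_product, hMcard]
          have : ((M i).erase (p : ℤ)).card ≤ P i := by
            rw [← hMcard i]; exact Finset.card_le_card (Finset.erase_subset _ _)
          exact Nat.mul_le_mul_left _ (Nat.mul_le_mul_left _ this)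
        calc Q.card = Q1.card + Q2.card := hsplitQ.symm
          _ = Q1.card := by rw [hQ2e, Nat.add_zero]
          _ ≤ Gf.card * (P i * P i) := hc2
    have hQbr : (Q.card : ℝ) ≤ (Gf.card : ℝ) * ((P i : ℝ) * (P i : ℝ)) := by
      exact_mod_cast hQb
    have hppos : (0:ℝ) < p := by positivity
    calc (p : ℝ) * Q.card ≤ (p : ℝ) * ((Gf.card : ℝ) * ((P i : ℝ) * (P i : ℝ))) :=
          mul_le_mul_of_nonneg_left hQbr hppos.le
      _ = (p : ℝ) * Gf.card * ((P i : ℝ) * (P i : ℝ)) := by ring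
  -- Step F : split off the zero frequency and assemble
  have hsplit : (∑ n : ZMod p, ∏ i, T i n)
      = (∏ i, T i 0) + ∑ n ∈ Finset.univ.erase (0 : ZMod p), ∏ i, T i n :=
    (Finset.add_sum_erase _ _ (Finset.mem_univ (0 : ZMod p))).symm
  have hmain : (∏ i, T i 0) = ((Gf.card : ℂ) ^ s) * ∏ i, (P i : ℂ) := by
    calc (∏ i, T i 0) = ∏ i, ((Gf.card : ℂ) * (P i : ℂ)) :=
          Finset.prod_congr rfl fun i _ => hT0 i
      _ = _ := by
          rw [Finset.prod_mul_distrib, Finset.prod_const, Finset.card_univ, Fintype.card_fin]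
  set E : ℝ := ∑ n ∈ Finset.univ.erase (0 : ZMod p), ∏ i, ‖T i n‖ with hE
  have hpA : (p : ℝ) * A ≤ (Gf.card : ℝ) ^ s * ∏ i, (P i : ℝ) + E := by
    have h1 : (p : ℂ) * (A : ℂ) - ((Gf.card : ℂ) ^ s) * ∏ i, (P i : ℂ)
        = ∑ n ∈ Finset.univ.erase (0 : ZMod p), ∏ i, T i n := by
      have h0 : (p : ℂ) * (A : ℂ) = ∑ n : ZMod p, ∏ i, T i n := by
        rw [hAcard]; exact_mod_cast key
      rw [h0, hsplit, hmain]; ring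
    have h3 : ((((p : ℝ) * A - (Gf.card : ℝ) ^ s * ∏ i, (P i : ℝ)) : ℝ) : ℂ)
        = ∑ n ∈ Finset.univ.erase (0 : ZMod p), ∏ i, T i n := by
      push_cast
      push_cast at h1
      exact h1
    have h2 : (p : ℝ) * A - (Gf.card : ℝ) ^ s * ∏ i, (P i : ℝ) ≤ E := by
      calc (p : ℝ) * A - (Gf.card : ℝ) ^ s * ∏ i, (P i : ℝ)
          = (((((p : ℝ) * A - (Gf.card : ℝ) ^ s * ∏ i, (P i : ℝ)) : ℝ) : ℂ)).re := by
            rw [Complex.ofReal_re]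
        _ ≤ ‖((((p : ℝ) * A - (Gf.card : ℝ) ^ s * ∏ i, (P i : ℝ)) : ℝ) : ℂ)‖ :=
            Complex.re_le_norm _
        _ = ‖∑ n ∈ Finset.univ.erase (0 : ZMod p), ∏ i, T i n‖ := by rw [h3]
        _ ≤ ∑ n ∈ Finset.univ.erase (0 : ZMod p), ‖∏ i, T i n‖ :=
            norm_sum_le _ _
        _ = E := by
            rw [hE]
            exact Finset.sum_congr rfl fun n _ => norm_prod _ _
    linarith
  -- two distinguished indices
  have h0s : 0 < s := by linarith
  have h1s : 1 < s := by linarith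
  set i0 : Fin s := ⟨0, h0s⟩ with hi0
  set i1 : Fin s := ⟨1, h1s⟩ with hi1
  have hne01 : i0 ≠ i1 := by
    rw [hi0, hi1]
    intro h
    exact absurd (congrArg Fin.val h) (by norm_num)
  set V : Finset (Fin s) := (Finset.univ.erase i0).erase i1 with hV
  have hi1mem : i1 ∈ Finset.univ.erase i0 :=
    Finset.mem_erase.mpr ⟨hne01.symm, Finset.mem_univ i1⟩
  have hVcard : V.card = s - 2 := by
    rw [hV, Finset.card_erase_of_mem hi1mem, Finset.card_erase_of_mem (Finset.mem_univ i0),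
      Finset.card_univ, Fintype.card_fin, Nat.sub_sub]
  have hprodsplit : ∀ f : Fin s → ℝ, (∏ i, f i) = f i0 * (f i1 * ∏ i ∈ V, f i) := by
    intro f
    rw [hV, Finset.mul_prod_erase _ f hi1mem, Finset.mul_prod_erase _ f (Finset.mem_univ i0)]
  -- bound the error term
  have hEb1 : E ≤ SG ^ (s - 2) * (∏ i ∈ V, (P i : ℝ)) *
      ∑ n ∈ Finset.univ.erase (0 : ZMod p), ‖T i0 n‖ * ‖T i1 n‖ := by
    rw [hE, Finset.mul_sum]
    apply Finset.sum_le_sum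
    intro n hn
    have hn0 : n ≠ 0 := Finset.ne_of_mem_erase hn
    rw [hprodsplit (fun i => ‖T i n‖)]
    have hVb : (∏ i ∈ V, ‖T i n‖) ≤ SG ^ (s - 2) * ∏ i ∈ V, (P i : ℝ) := by
      calc (∏ i ∈ V, ‖T i n‖) ≤ ∏ i ∈ V, (SG * (P i : ℝ)) :=
            Finset.prod_le_prod (fun _ _ => norm_nonneg _)
              (fun i _ => hTbound i n hn0)
        _ = SG ^ V.card * ∏ i ∈ V, (P i : ℝ) := by
            rw [Finset.prod_mul_distrib, Finset.prod_const]
        _ = SG ^ (s - 2) * ∏ i ∈ V, (P i : ℝ) := by rw [hVcard]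
    calc ‖T i0 n‖ * (‖T i1 n‖ * ∏ i ∈ V, ‖T i n‖)
        ≤ ‖T i0 n‖ * (‖T i1 n‖ *
            (SG ^ (s - 2) * ∏ i ∈ V, (P i : ℝ))) := by
          apply mul_le_mul_of_nonneg_left
          · exact mul_le_mul_of_nonneg_left hVb (norm_nonneg _)
          · exact norm_nonneg _
      _ = SG ^ (s - 2) * (∏ i ∈ V, (P i : ℝ)) *
            (‖T i0 n‖ * ‖T i1 n‖) := by ring
  -- Cauchy–Schwarz
  have hCS : (∑ n ∈ Finset.univ.erase (0 : ZMod p), ‖T i0 n‖ * ‖T i1 n‖)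
      ≤ (p : ℝ) * Gf.card * ((P i0 : ℝ) * (P i1 : ℝ)) := by
    have hcs := Finset.sum_mul_sq_le_sq_mul_sq (Finset.univ.erase (0 : ZMod p))
      (fun n => ‖T i0 n‖) (fun n => ‖T i1 n‖)
    have hsub : ∀ j : Fin s, (∑ n ∈ Finset.univ.erase (0 : ZMod p), ‖T j n‖ ^ 2)
        ≤ (p : ℝ) * Gf.card * ((P j : ℝ) * (P j : ℝ)) := by
      intro j
      refine le_trans ?_ (hpars j)
      exact Finset.sum_le_sum_of_subset_of_nonneg (Finset.subset_univ _)
        (fun n _ _ => sq_nonneg _)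
    have hLnn : 0 ≤ ∑ n ∈ Finset.univ.erase (0 : ZMod p),
        ‖T i0 n‖ * ‖T i1 n‖ :=
      Finset.sum_nonneg fun n _ =>
        mul_nonneg (norm_nonneg _) (norm_nonneg _)
    have hRnn : (0:ℝ) ≤ (p : ℝ) * Gf.card * ((P i0 : ℝ) * (P i1 : ℝ)) := by positivity
    have hsq : (∑ n ∈ Finset.univ.erase (0 : ZMod p),
        ‖T i0 n‖ * ‖T i1 n‖) ^ 2
        ≤ ((p : ℝ) * Gf.card * ((P i0 : ℝ) * (P i1 : ℝ))) ^ 2 := by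
      refine hcs.trans ?_
      calc (∑ n ∈ Finset.univ.erase (0 : ZMod p), ‖T i0 n‖ ^ 2) *
            (∑ n ∈ Finset.univ.erase (0 : ZMod p), ‖T i1 n‖ ^ 2)
          ≤ ((p : ℝ) * Gf.card * ((P i0 : ℝ) * (P i0 : ℝ))) *
            ((p : ℝ) * Gf.card * ((P i1 : ℝ) * (P i1 : ℝ))) := by
            apply mul_le_mul (hsub i0) (hsub i1)
              (Finset.sum_nonneg fun n _ => sq_nonneg _) (by positivity)
        _ = ((p : ℝ) * Gf.card * ((P i0 : ℝ) * (P i1 : ℝ))) ^ 2 := by ring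
    nlinarith [hsq, hLnn, hRnn]
  -- put everything together
  have hPiprod : (∏ i, (P i : ℝ)) = (P i0 : ℝ) * ((P i1 : ℝ) * ∏ i ∈ V, (P i : ℝ)) :=
    hprodsplit (fun i => (P i : ℝ))
  have hVnn : (0:ℝ) ≤ ∏ i ∈ V, (P i : ℝ) := Finset.prod_nonneg fun i _ => by positivity
  have hfinal : (p : ℝ) * A ≤ (Gf.card : ℝ) ^ s * ∏ i, (P i : ℝ) +
      (p : ℝ) * (SG ^ (s - 2) * (Gf.card : ℝ) * ∏ i, (P i : ℝ)) := by
    have hEb2 : E ≤ (p : ℝ) * (SG ^ (s - 2) * (Gf.card : ℝ) * ∏ i, (P i : ℝ)) := by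
      refine hEb1.trans ?_
      calc SG ^ (s - 2) * (∏ i ∈ V, (P i : ℝ)) *
            (∑ n ∈ Finset.univ.erase (0 : ZMod p),
              ‖T i0 n‖ * ‖T i1 n‖)
          ≤ SG ^ (s - 2) * (∏ i ∈ V, (P i : ℝ)) *
            ((p : ℝ) * Gf.card * ((P i0 : ℝ) * (P i1 : ℝ))) := by
            apply mul_le_mul_of_nonneg_left hCS
            exact mul_nonneg (pow_nonneg hSGnn _) hVnn
        _ = (p : ℝ) * (SG ^ (s - 2) * (Gf.card : ℝ) * ∏ i, (P i : ℝ)) := by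
            rw [hPiprod]; ring
    linarith
  have hppos2 : (0:ℝ) < p := by positivity
  have hGr : ((Nat.card G : ℕ) : ℝ) = ((Gf.card : ℕ) : ℝ) := by exact_mod_cast hGcard
  rw [hGr]
  calc (A : ℝ) = ((p : ℝ) * A) / p := by field_simp
    _ ≤ ((Gf.card : ℝ) ^ s * ∏ i, (P i : ℝ) +
          (p : ℝ) * (SG ^ (s - 2) * (Gf.card : ℝ) * ∏ i, (P i : ℝ))) / p :=
        (div_le_div_iff_of_pos_right hppos2).mpr hfinal
    _ = ((Gf.card : ℝ) ^ s / p) * ∏ i, (P i : ℝ) +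
          SG ^ (s - 2) * (Gf.card : ℝ) * ∏ i, (P i : ℝ) := by
        field_simp
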